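/- Let U be a finite set, let p_A, q_A, p_B, q_B : U → [0,1] with q_A(x) > 0 for all x, suppose μ(x) = p_A(x)·p_B(x), ν_A(x) = p_A(x)·q_A(x), and ν_B(x) = p_B(x)·q_B(x) are probability distributions on U, let I ≥ 0 with D(μ‖ν_A) ≤ I and D(μ‖ν_B) ≤ I, and set K = 2^{50(I+1)} and G = {x ∈ U : μ(x) ≤ K·ν_A(x) and μ(x) ≤ K·ν_B(x)}. Then Σ_{x∈G} ν_A(x)·min(p_B(x)/(K·q_A(x)), 1) = μ(G)/K ≥ (24/25)·2^{−50(I+1)}. -/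

import Mathlib

open Finset

/-- Markov-style bound: if `D(μ‖ν) ≤ I` then `μ{x : μ(x) > 2^{50(I+1)} ν(x)} ≤ 1/50`. -/
lemma markov_bad {U : Type*} [Fintype U] (μ ν : U → ℝ) (I : ℝ)
    (hμ0 : ∀ x, 0 ≤ μ x) (hν0 : ∀ x, 0 ≤ ν x)
    (hpos : ∀ x, 0 < μ x → 0 < ν x)
    (hμ1 : ∑ x, μ x = 1) (hν1 : ∑ x, ν x = 1) (hI : 0 ≤ I)
    (hKL : ∑ x, μ x * Real.logb 2 (μ x / ν x) ≤ I) :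
    ∑ x ∈ Finset.univ.filter (fun x => ¬ μ x ≤ (2:ℝ) ^ (50*(I+1)) * ν x), μ x ≤ 1/50 := by
  set t : ℝ := 50*(I+1) with ht
  have hl2 : (0.6931471803 : ℝ) < Real.log 2 := Real.log_two_gt_d9
  have hl2pos : (0:ℝ) < Real.log 2 := by linarith
  have hKpos : (0:ℝ) < (2:ℝ) ^ t := Real.rpow_pos_of_pos (by norm_num) t
  -- natural-log version of the KL bound
  have hKL' : ∑ x, μ x * Real.log (μ x / ν x) ≤ I * Real.log 2 := by
    have heq : ∑ x, μ x * Real.log (μ x / ν x)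
        = (∑ x, μ x * Real.logb 2 (μ x / ν x)) * Real.log 2 := by
      rw [Finset.sum_mul]
      refine Finset.sum_congr rfl fun x _ => ?_
      rw [Real.logb]
      field_simp
    rw [heq]
    exact mul_le_mul_of_nonneg_right hKL hl2pos.le
  -- split the sum
  have hsplitμ := Finset.sum_filter_add_sum_filter_not Finset.univ
      (fun x => μ x ≤ (2:ℝ) ^ t * ν x) μ
  have hsplitν := Finset.sum_filter_add_sum_filter_not Finset.univ
      (fun x => μ x ≤ (2:ℝ) ^ t * ν x) ν
  have hsplitf := Finset.sum_filter_add_sum_filter_not Finset.univ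
      (fun x => μ x ≤ (2:ℝ) ^ t * ν x) (fun x => μ x * Real.log (μ x / ν x))
  set S := Finset.univ.filter (fun x => ¬ μ x ≤ (2:ℝ) ^ t * ν x) with hS
  set Sc := Finset.univ.filter (fun x => μ x ≤ (2:ℝ) ^ t * ν x) with hSc
  -- bound on the bad set
  have h1 : ∀ x ∈ S, t * Real.log 2 * μ x ≤ μ x * Real.log (μ x / ν x) := by
    intro x hx
    rw [hS, Finset.mem_filter] at hx
    have hgt : (2:ℝ) ^ t * ν x < μ x := lt_of_not_ge hx.2
    have hμx : 0 < μ x := lt_of_le_of_lt (mul_nonneg hKpos.le (hν0 x)) hgt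
    have hνx : 0 < ν x := hpos x hμx
    have hr : (2:ℝ) ^ t < μ x / ν x := (lt_div_iff₀ hνx).2 (by linarith)
    have hlog := Real.log_le_log hKpos hr.le
    rw [Real.log_rpow (by norm_num)] at hlog
    calc t * Real.log 2 * μ x = μ x * (t * Real.log 2) := by ring
      _ ≤ μ x * Real.log (μ x / ν x) := mul_le_mul_of_nonneg_left hlog hμx.le
  have h1' : t * Real.log 2 * ∑ x ∈ S, μ x ≤ ∑ x ∈ S, μ x * Real.log (μ x / ν x) := by
    rw [Finset.mul_sum]; exact Finset.sum_le_sum h1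
  -- bound on the good set
  have h2 : ∀ x ∈ Sc, μ x - ν x ≤ μ x * Real.log (μ x / ν x) := by
    intro x _
    rcases eq_or_lt_of_le (hμ0 x) with h | hμx
    · simp [← h]; linarith [hν0 x]
    · have hνx : 0 < ν x := hpos x hμx
      have hlog := Real.log_le_sub_one_of_pos (show (0:ℝ) < ν x / μ x by positivity)
      have hlog2 : Real.log (μ x / ν x) = - Real.log (ν x / μ x) := by
        rw [← Real.log_inv, inv_div]
      have h2' := mul_le_mul_of_nonneg_left hlog hμx.le
      have hc : μ x * (ν x / μ x - 1) = ν x - μ x := by field_simp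
      rw [hlog2, mul_neg]
      linarith [h2', hc.le, hc.ge]
  have h2' : ∑ x ∈ Sc, (μ x - ν x) ≤ ∑ x ∈ Sc, μ x * Real.log (μ x / ν x) :=
    Finset.sum_le_sum h2
  have hScμ : ∑ x ∈ Sc, μ x = 1 - ∑ x ∈ S, μ x := by rw [← hμ1, ← hsplitμ]; ring
  have hScν : ∑ x ∈ Sc, ν x = 1 - ∑ x ∈ S, ν x := by rw [← hν1, ← hsplitν]; ring
  have hSν0 : 0 ≤ ∑ x ∈ S, ν x := Finset.sum_nonneg fun x _ => hν0 x
  have hSμ0 : 0 ≤ ∑ x ∈ S, μ x := Finset.sum_nonneg fun x _ => hμ0 x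
  have hSc2 : ∑ x ∈ Sc, (μ x - ν x) = (∑ x ∈ Sc, μ x) - ∑ x ∈ Sc, ν x :=
    Finset.sum_sub_distrib μ ν
  -- key inequality
  have key : t * Real.log 2 * ∑ x ∈ S, μ x - ∑ x ∈ S, μ x ≤ I * Real.log 2 := by
    have := hsplitf
    nlinarith [h1', h2', hKL', hSν0, hSc2, hScμ, hScν]
  rw [ht] at key
  by_contra hcon
  push_neg at hcon
  nlinarith [key, hcon, hl2, hSμ0, mul_nonneg hI hl2pos.le,
    mul_pos (lt_trans (by norm_num : (0:ℝ) < 1/50) hcon) hl2pos]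

theorem acceptance_on_good_set {U : Type*} [Fintype U] (pA qA pB qB : U → ℝ) (I : ℝ)
    (hpA : ∀ x, pA x ∈ Set.Icc (0 : ℝ) 1) (hqA : ∀ x, qA x ∈ Set.Icc (0 : ℝ) 1)
    (hpB : ∀ x, pB x ∈ Set.Icc (0 : ℝ) 1) (hqB : ∀ x, qB x ∈ Set.Icc (0 : ℝ) 1)
    (hqA0 : ∀ x, 0 < qA x)
    (hμ1 : ∑ x, pA x * pB x = 1)
    (hνA1 : ∑ x, pA x * qA x = 1)
    (hνB1 : ∑ x, pB x * qB x = 1)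
    (habsB : ∀ x, 0 < pA x * pB x → 0 < pB x * qB x)
    (hI : 0 ≤ I)
    (hKLA : ∑ x, pA x * pB x * Real.logb 2 ((pA x * pB x) / (pA x * qA x)) ≤ I)
    (hKLB : ∑ x, pA x * pB x * Real.logb 2 ((pA x * pB x) / (pB x * qB x)) ≤ I) :
    (∑ x ∈ Finset.univ.filter
        (fun x => pA x * pB x ≤ (2 : ℝ) ^ (50 * (I + 1)) * (pA x * qA x) ∧
                  pA x * pB x ≤ (2 : ℝ) ^ (50 * (I + 1)) * (pB x * qB x)),
        pA x * qA x * min (pB x / ((2 : ℝ) ^ (50 * (I + 1)) * qA x)) 1)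
      = (∑ x ∈ Finset.univ.filter
          (fun x => pA x * pB x ≤ (2 : ℝ) ^ (50 * (I + 1)) * (pA x * qA x) ∧
                    pA x * pB x ≤ (2 : ℝ) ^ (50 * (I + 1)) * (pB x * qB x)),
          pA x * pB x) / (2 : ℝ) ^ (50 * (I + 1)) ∧
    (24 / 25 : ℝ) * (2 : ℝ) ^ (-(50 * (I + 1)))
      ≤ (∑ x ∈ Finset.univ.filter
          (fun x => pA x * pB x ≤ (2 : ℝ) ^ (50 * (I + 1)) * (pA x * qA x) ∧
                    pA x * pB x ≤ (2 : ℝ) ^ (50 * (I + 1)) * (pB x * qB x)),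
          pA x * pB x) / (2 : ℝ) ^ (50 * (I + 1)) := by
  classical
  have hKpos : (0:ℝ) < (2:ℝ) ^ (50*(I+1)) := Real.rpow_pos_of_pos (by norm_num) _
  set K : ℝ := (2:ℝ) ^ (50*(I+1)) with hK
  set G := Finset.univ.filter
      (fun x => pA x * pB x ≤ K * (pA x * qA x) ∧ pA x * pB x ≤ K * (pB x * qB x)) with hG
  constructor
  · -- termwise equality
    rw [Finset.sum_div]
    refine Finset.sum_congr rfl fun x hx => ?_
    rw [hG, Finset.mem_filter] at hx
    obtain ⟨-, hx1, -⟩ := hx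
    rcases eq_or_lt_of_le (hpA x).1 with h | hpAx
    · rw [← h]; ring
    · have hqAx := hqA0 x
      have hpBle : pB x ≤ K * qA x := by
        have := hx1
        nlinarith
      have hmin : min (pB x / (K * qA x)) 1 = pB x / (K * qA x) :=
        min_eq_left ((div_le_one (by positivity)).2 hpBle)
      rw [hmin]
      field_simp
  · -- lower bound
    have hμ0 : ∀ x, 0 ≤ pA x * pB x := fun x => mul_nonneg (hpA x).1 (hpB x).1
    have hbadA := markov_bad (fun x => pA x * pB x) (fun x => pA x * qA x) I
      hμ0 (fun x => mul_nonneg (hpA x).1 (hqA x).1)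
      (fun x hx => by
        have h1 : 0 < pA x := by
          by_contra h
          push_neg at h
          have h0 : pA x = 0 := le_antisymm h (hpA x).1
          have hx' : 0 < pA x * pB x := hx
          rw [h0, zero_mul] at hx'
          exact lt_irrefl 0 hx'
        exact mul_pos h1 (hqA0 x))
      hμ1 hνA1 hI hKLA
    have hbadB := markov_bad (fun x => pA x * pB x) (fun x => pB x * qB x) I
      hμ0 (fun x => mul_nonneg (hpB x).1 (hqB x).1) habsB hμ1 hνB1 hI hKLB
    -- the complement of G has small mass
    set SA := Finset.univ.filter (fun x => ¬ pA x * pB x ≤ K * (pA x * qA x)) with hSA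
    set SB := Finset.univ.filter (fun x => ¬ pA x * pB x ≤ K * (pB x * qB x)) with hSB
    have hsub : Finset.univ.filter
        (fun x => ¬ (pA x * pB x ≤ K * (pA x * qA x) ∧ pA x * pB x ≤ K * (pB x * qB x)))
        ⊆ SA ∪ SB := by
      intro x hx
      rw [Finset.mem_filter, not_and_or] at hx
      rw [Finset.mem_union, hSA, hSB, Finset.mem_filter, Finset.mem_filter]
      tauto
    have hGc : ∑ x ∈ Finset.univ.filter
        (fun x => ¬ (pA x * pB x ≤ K * (pA x * qA x) ∧ pA x * pB x ≤ K * (pB x * qB x))),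
        pA x * pB x ≤ 2/50 := by
      have h1 : ∑ x ∈ Finset.univ.filter
          (fun x => ¬ (pA x * pB x ≤ K * (pA x * qA x) ∧ pA x * pB x ≤ K * (pB x * qB x))),
          pA x * pB x ≤ ∑ x ∈ SA ∪ SB, pA x * pB x :=
        Finset.sum_le_sum_of_subset_of_nonneg hsub (fun x _ _ => hμ0 x)
      have h2 := Finset.sum_union_inter (s₁ := SA) (s₂ := SB) (f := fun x => pA x * pB x)
      have h3 : 0 ≤ ∑ x ∈ SA ∩ SB, pA x * pB x := Finset.sum_nonneg fun x _ => hμ0 x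
      have hA : ∑ x ∈ SA, pA x * pB x ≤ 1/50 := hbadA
      have hB : ∑ x ∈ SB, pA x * pB x ≤ 1/50 := hbadB
      linarith
    have hsplit := Finset.sum_filter_add_sum_filter_not Finset.univ
        (fun x => pA x * pB x ≤ K * (pA x * qA x) ∧ pA x * pB x ≤ K * (pB x * qB x))
        (fun x => pA x * pB x)
    have hGge : (24/25 : ℝ) ≤ ∑ x ∈ G, pA x * pB x := by
      rw [hG]
      have := hμ1
      linarith
    have hneg : (2:ℝ) ^ (-(50*(I+1))) = K⁻¹ := by
      rw [hK, ← Real.rpow_neg (by norm_num : (0:ℝ) ≤ 2)]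
    rw [hneg, div_eq_mul_inv]
    exact mul_le_mul_of_nonneg_right hGge (inv_nonneg.2 hKpos.le)
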